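/- Let C be a nonnegative bounded real random variable with E[C] finite, and let p ∈ (0,1]. Define the sequence T₁ = 0 and T_{L+1} = p·E[C] + (1−p)·( E[C·1{C ≤ T_L}] + T_L·P(C > T_L) ). Then the sequence (T_L) is nondecreasing in L. -/

import Mathlib

open MeasureTheory

lemma min_split_integral {Ω : Type*} [MeasurableSpace Ω] (μ : Measure Ω)
    [IsProbabilityMeasure μ] (C : Ω → ℝ) (hCmeas : Measurable C)
    (hCint : Integrable C μ) (s : ℝ) :
    (∫ ω in {ω | C ω ≤ s}, C ω ∂μ) + s * (μ {ω | s < C ω}).toReal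
      = ∫ ω, min (C ω) s ∂μ := by
  have hmin : Integrable (fun ω => min (C ω) s) μ :=
    hCint.inf (integrable_const s)
  have hA : MeasurableSet {ω | C ω ≤ s} := measurableSet_le hCmeas measurable_const
  have h1 : (∫ ω in {ω | C ω ≤ s}, min (C ω) s ∂μ)
      = ∫ ω in {ω | C ω ≤ s}, C ω ∂μ := by
    refine setIntegral_congr_fun hA fun ω hω => ?_
    exact min_eq_left hω
  have h2 : (∫ ω in {ω | C ω ≤ s}ᶜ, min (C ω) s ∂μ)
      = s * (μ {ω | s < C ω}).toReal := by
    have hc : {ω | C ω ≤ s}ᶜ = {ω | s < C ω} := by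
      ext ω; simp [not_le]
    rw [hc]
    have : (∫ ω in {ω | s < C ω}, min (C ω) s ∂μ)
        = ∫ _ω in {ω | s < C ω}, s ∂μ := by
      refine setIntegral_congr_fun (measurableSet_lt measurable_const hCmeas)
        fun ω hω => ?_
      exact min_eq_right (le_of_lt hω)
    rw [this, setIntegral_const, smul_eq_mul, mul_comm]
    rfl
  rw [← h1, ← h2, integral_add_compl hA hmin]

theorem threshold_recursion_monotone
    {Ω : Type*} [MeasurableSpace Ω] (μ : Measure Ω) [IsProbabilityMeasure μ]
    (C : Ω → ℝ) (hCmeas : Measurable C) (hCnonneg : ∀ ω, 0 ≤ C ω)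
    (M : ℝ) (hCbdd : ∀ ω, C ω ≤ M)
    (hCint : Integrable C μ)
    (p : ℝ) (hp : p ∈ Set.Ioc (0 : ℝ) 1)
    (T : ℕ → ℝ) (hT1 : T 1 = 0)
    (hTrec : ∀ L, 1 ≤ L →
      T (L + 1) = p * (∫ ω, C ω ∂μ) +
        (1 - p) * ((∫ ω in {ω | C ω ≤ T L}, C ω ∂μ)
          + T L * (μ {ω | T L < C ω}).toReal)) :
    ∀ L, 1 ≤ L → T L ≤ T (L + 1) := by
  have hmin : ∀ s : ℝ, Integrable (fun ω => min (C ω) s) μ :=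
    fun s => hCint.inf (integrable_const s)
  have hmono : ∀ s t : ℝ, s ≤ t →
      (∫ ω, min (C ω) s ∂μ) ≤ ∫ ω, min (C ω) t ∂μ := fun s t hst =>
    integral_mono (hmin s) (hmin t) (fun ω => min_le_min le_rfl hst)
  intro L hL
  induction L with
  | zero => omega
  | succ n ih =>
    rcases Nat.eq_or_lt_of_le hL with h1 | h2
    · -- n + 1 = 1, base case
      have hn : n = 0 := by omega
      subst hn
      rw [hT1, hTrec 1 le_rfl, hT1]
      have hEC : 0 ≤ ∫ ω, C ω ∂μ := integral_nonneg hCnonneg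
      have hset : 0 ≤ ∫ ω in {ω | C ω ≤ (0:ℝ)}, C ω ∂μ :=
        setIntegral_nonneg (measurableSet_le hCmeas measurable_const)
          (fun ω _ => hCnonneg ω)
      have hp1 : 0 ≤ 1 - p := by linarith [hp.2]
      nlinarith [hp.1]
    · -- n ≥ 1
      have hn : 1 ≤ n := by omega
      have ihn := ih hn
      rw [hTrec n hn, hTrec (n+1) (by omega)]
      have hp1 : 0 ≤ 1 - p := by linarith [hp.2]
      have e1 := min_split_integral μ C hCmeas hCint (T n)
      have e2 := min_split_integral μ C hCmeas hCint (T (n+1))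
      have := hmono (T n) (T (n+1)) ihn
      nlinarith
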